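/- For 1 < γ ≤ 2 and positive reals ρ̄, ρ, the relative entropy H(ρ̄|ρ) := (1/(γ-1))(ρ̄^γ - ρ^γ + γ(ρ - ρ̄)ρ^{γ-1}) satisfies H(ρ̄|ρ) ≥ (γ/2)·min(ρ̄^{γ-2}, ρ^{γ-2})·(ρ̄ - ρ)². -/

import Mathlib

open Real

private lemma phi_mono (γ b c : ℝ) (hγ1 : 1 < γ) (hγ2 : γ ≤ 2) (hc : 0 < c) :
    MonotoneOn (fun x => x ^ (γ-1) - (γ-1) * b ^ (γ-2) * x) (Set.Icc c b) := by
  apply monotoneOn_of_hasDerivWithinAt_nonneg (convex_Icc c b)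
    (f' := fun x => (γ-1) * x ^ (γ-2) - (γ-1) * b ^ (γ-2))
  · apply ContinuousOn.sub
    · exact fun x hx => (Real.continuousAt_rpow_const x (γ-1)
        (Or.inl (lt_of_lt_of_le hc hx.1).ne')).continuousWithinAt
    · exact (continuous_const.mul continuous_id).continuousOn
  · intro x hx
    rw [interior_Icc] at hx
    have hx0 : 0 < x := lt_trans hc hx.1
    have h1 : HasDerivAt (fun y : ℝ => y ^ (γ-1)) ((γ-1) * x ^ (γ-1-1)) x :=
      Real.hasDerivAt_rpow_const (Or.inl hx0.ne')
    have h2 : HasDerivAt (fun y : ℝ => (γ-1) * b ^ (γ-2) * y)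
        ((γ-1) * b ^ (γ-2)) x := by
      simpa using (hasDerivAt_id x).const_mul ((γ-1) * b ^ (γ-2))
    have := (h1.sub h2).hasDerivWithinAt (s := interior (Set.Icc c b))
    norm_num at this ⊢
    convert this using 2
    all_goals (try rfl)
    ring_nf
  · intro x hx
    rw [interior_Icc] at hx
    have hx0 : 0 < x := lt_trans hc hx.1
    have : b ^ (γ-2) ≤ x ^ (γ-2) :=
      Real.rpow_le_rpow_of_nonpos hx0 hx.2.le (by linarith)
    nlinarith [this]

/-- base point c (left endpoint), evaluation at d -/
private lemma auxL (γ c d : ℝ) (hγ1 : 1 < γ) (hγ2 : γ ≤ 2) (hc : 0 < c) (hcd : c ≤ d) :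
    γ*(γ-1)/2 * d^(γ-2) * (d-c)^2 ≤ d^γ - c^γ - γ*c^(γ-1)*(d-c) := by
  set g : ℝ → ℝ := fun x => x ^ γ - γ*c^(γ-1)*x - γ*(γ-1)/2 * d^(γ-2) * (x-c)^2 with hg
  have hmono : MonotoneOn g (Set.Icc c d) := by
    apply monotoneOn_of_hasDerivWithinAt_nonneg (convex_Icc c d)
      (f' := fun x => γ * x ^ (γ-1) - γ*c^(γ-1) - γ*(γ-1)* d^(γ-2) * (x-c))
    · apply ContinuousOn.sub
      apply ContinuousOn.sub
      · exact fun x hx => (Real.continuousAt_rpow_const x γ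
          (Or.inl (lt_of_lt_of_le hc hx.1).ne')).continuousWithinAt
      · fun_prop
      · fun_prop
    · intro x hx
      rw [interior_Icc] at hx
      have hx0 : 0 < x := lt_trans hc hx.1
      have h1 : HasDerivAt (fun y : ℝ => y ^ γ) (γ * x ^ (γ-1)) x := by
        have := Real.hasDerivAt_rpow_const (x := x) (p := γ) (Or.inl hx0.ne')
        convert this using 2
      have h2 : HasDerivAt (fun y : ℝ => γ*c^(γ-1)*y) (γ*c^(γ-1)) x := by
        simpa using (hasDerivAt_id x).const_mul (γ*c^(γ-1))
      have h3 : HasDerivAt (fun y : ℝ => γ*(γ-1)/2 * d^(γ-2) * (y-c)^2)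
          (γ*(γ-1)* d^(γ-2) * (x-c)) x := by
        have hb : HasDerivAt (fun y : ℝ => (y-c)^2) (2*(x-c)) x := by
          have := ((hasDerivAt_id x).sub_const c).pow 2
          convert this using 1
          all_goals (try rfl)
          simp
        have := hb.const_mul (γ*(γ-1)/2 * d^(γ-2))
        convert this using 1
        all_goals (try rfl)
        ring
      exact ((h1.sub h2).sub h3).hasDerivWithinAt
    · intro x hx
      rw [interior_Icc] at hx
      have hx0 : 0 < x := lt_trans hc hx.1
      have key := phi_mono γ d c hγ1 hγ2 hc
        (Set.mem_Icc.mpr ⟨le_refl c, hcd⟩) (Set.mem_Icc.mpr ⟨hx.1.le, hx.2.le⟩) hx.1.le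
      simp only at key
      nlinarith [key, hγ1]
  have := hmono (Set.mem_Icc.mpr ⟨le_refl c, hcd⟩) (Set.mem_Icc.mpr ⟨hcd, le_refl d⟩) hcd
  simp only [hg] at this
  nlinarith [this]

/-- base point d (right endpoint), evaluation at c -/
private lemma auxR (γ c d : ℝ) (hγ1 : 1 < γ) (hγ2 : γ ≤ 2) (hc : 0 < c) (hcd : c ≤ d) :
    γ*(γ-1)/2 * d^(γ-2) * (c-d)^2 ≤ c^γ - d^γ - γ*d^(γ-1)*(c-d) := by
  set g : ℝ → ℝ := fun x => x ^ γ - γ*d^(γ-1)*x - γ*(γ-1)/2 * d^(γ-2) * (x-d)^2 with hg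
  have hmono : AntitoneOn g (Set.Icc c d) := by
    apply antitoneOn_of_hasDerivWithinAt_nonpos (convex_Icc c d)
      (f' := fun x => γ * x ^ (γ-1) - γ*d^(γ-1) - γ*(γ-1)* d^(γ-2) * (x-d))
    · apply ContinuousOn.sub
      apply ContinuousOn.sub
      · exact fun x hx => (Real.continuousAt_rpow_const x γ
          (Or.inl (lt_of_lt_of_le hc hx.1).ne')).continuousWithinAt
      · fun_prop
      · fun_prop
    · intro x hx
      rw [interior_Icc] at hx
      have hx0 : 0 < x := lt_trans hc hx.1
      have h1 : HasDerivAt (fun y : ℝ => y ^ γ) (γ * x ^ (γ-1)) x := by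
        have := Real.hasDerivAt_rpow_const (x := x) (p := γ) (Or.inl hx0.ne')
        convert this using 2
      have h2 : HasDerivAt (fun y : ℝ => γ*d^(γ-1)*y) (γ*d^(γ-1)) x := by
        simpa using (hasDerivAt_id x).const_mul (γ*d^(γ-1))
      have h3 : HasDerivAt (fun y : ℝ => γ*(γ-1)/2 * d^(γ-2) * (y-d)^2)
          (γ*(γ-1)* d^(γ-2) * (x-d)) x := by
        have hb : HasDerivAt (fun y : ℝ => (y-d)^2) (2*(x-d)) x := by
          have := ((hasDerivAt_id x).sub_const d).pow 2
          convert this using 1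
          all_goals (try rfl)
          simp
        have := hb.const_mul (γ*(γ-1)/2 * d^(γ-2))
        convert this using 1
        all_goals (try rfl)
        ring
      exact ((h1.sub h2).sub h3).hasDerivWithinAt
    · intro x hx
      rw [interior_Icc] at hx
      have hx0 : 0 < x := lt_trans hc hx.1
      have key := phi_mono γ d c hγ1 hγ2 hc
        (Set.mem_Icc.mpr ⟨hx.1.le, hx.2.le⟩) (Set.mem_Icc.mpr ⟨hcd, le_refl d⟩) hx.2.le
      simp only at key
      nlinarith [key, hγ1]
  have := hmono (Set.mem_Icc.mpr ⟨le_refl c, hcd⟩) (Set.mem_Icc.mpr ⟨hcd, le_refl d⟩) hcd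
  simp only [hg] at this
  nlinarith [this]

/-- For `1 < γ ≤ 2` and `ρ̄, ρ > 0`, the relative entropy
`H(ρ̄|ρ) = (1/(γ-1))(ρ̄^γ - ρ^γ + γ(ρ - ρ̄)ρ^(γ-1))` satisfies
`H(ρ̄|ρ) ≥ (γ/2) min(ρ̄^(γ-2), ρ^(γ-2)) (ρ̄ - ρ)²`. -/
theorem relative_entropy_lower_bound_gamma_le_two (γ ρb ρ : ℝ)
    (hγ1 : 1 < γ) (hγ2 : γ ≤ 2) (hρb : 0 < ρb) (hρ : 0 < ρ) :
    (γ/2) * min (ρb ^ (γ-2)) (ρ ^ (γ-2)) * (ρb - ρ)^2 ≤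
      (1/(γ-1)) * (ρb ^ γ - ρ ^ γ + γ*(ρ - ρb)*ρ ^ (γ-1)) := by
  have hγ0 : 0 < γ - 1 := by linarith
  rcases le_total ρ ρb with h | h
  · -- ρ ≤ ρb : min = ρb^(γ-2)
    have hmin : min (ρb ^ (γ-2)) (ρ ^ (γ-2)) = ρb ^ (γ-2) :=
      min_eq_left (Real.rpow_le_rpow_of_nonpos hρ h (by linarith))
    rw [hmin]
    have key := auxL γ ρ ρb hγ1 hγ2 hρ h
    rw [← sub_nonneg]
    have : (1/(γ-1)) * (ρb ^ γ - ρ ^ γ + γ*(ρ - ρb)*ρ ^ (γ-1)) -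
        (γ/2) * ρb ^ (γ-2) * (ρb - ρ)^2 =
        (1/(γ-1)) * ((ρb^γ - ρ^γ - γ*ρ^(γ-1)*(ρb-ρ)) - γ*(γ-1)/2 * ρb^(γ-2) * (ρb-ρ)^2) := by
      field_simp
      ring
    rw [this]
    apply mul_nonneg (by positivity)
    linarith [key]
  · have hmin : min (ρb ^ (γ-2)) (ρ ^ (γ-2)) = ρ ^ (γ-2) :=
      min_eq_right (Real.rpow_le_rpow_of_nonpos hρb h (by linarith))
    rw [hmin]
    have key := auxR γ ρb ρ hγ1 hγ2 hρb h
    rw [← sub_nonneg]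
    have : (1/(γ-1)) * (ρb ^ γ - ρ ^ γ + γ*(ρ - ρb)*ρ ^ (γ-1)) -
        (γ/2) * ρ ^ (γ-2) * (ρb - ρ)^2 =
        (1/(γ-1)) * ((ρb^γ - ρ^γ - γ*ρ^(γ-1)*(ρb-ρ)) - γ*(γ-1)/2 * ρ^(γ-2) * (ρb-ρ)^2) := by
      field_simp
      ring
    rw [this]
    apply mul_nonneg (by positivity)
    nlinarith [key]
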